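/- Let g : U → ℂ be holomorphic with fixed point z₀, |g'(z₀)| = 1, satisfying the local log-Lipschitz bound on |g'| at z₀. Then for every δ > 0 there exist λ ∈ (0,1) and r₀ > 0 such that for all n large enough, with rₙ = r₀·exp(−nδ) and B = B(z₀, rₙ), for all i = 1,…,n and all x, y ∈ B: |(g^i)'(x)/(g^i)'(y) − 1| ≤ λⁿ (small complex distortion of the iterates on exponentially small discs). -/

import Mathlib

open Metric Function Filter

private lemma prod_dist_one {ε : ℝ} {n : ℕ} (hε : 0 ≤ ε) (hnε : (n:ℝ) * ε ≤ 1/2)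
    (a : ℕ → ℂ) (ha : ∀ j < n, ‖a j - 1‖ ≤ ε) :
    ∀ i ≤ n, ‖(∏ j ∈ Finset.range i, a j) - 1‖ ≤ 3 * i * ε := by
  intro i
  induction i with
  | zero => intro _; simp
  | succ k ih =>
    intro hki
    have hk : k ≤ n := Nat.le_of_succ_le hki
    have h1 := ih hk
    have h2 := ha k hki
    rw [Finset.prod_range_succ]
    have key : (∏ j ∈ Finset.range k, a j) * a k - 1
        = ((∏ j ∈ Finset.range k, a j) - 1) * a k + (a k - 1) := by ring
    have hak : ‖a k‖ ≤ 1 + ε := by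
      calc ‖a k‖ = ‖(a k - 1) + 1‖ := by ring_nf
        _ ≤ ‖a k - 1‖ + ‖(1:ℂ)‖ := norm_add_le _ _
        _ ≤ ε + 1 := by rw [norm_one]; linarith
        _ = 1 + ε := by ring
    have hkε : (k:ℝ) * ε ≤ 1/2 := by
      have : (k:ℝ) ≤ (n:ℝ) := by exact_mod_cast hk
      nlinarith
    have hm : ‖(∏ j ∈ Finset.range k, a j) - 1‖ * ‖a k‖ ≤ (3 * k * ε) * (1 + ε) :=
      mul_le_mul h1 hak (norm_nonneg _) (by positivity)
    calc ‖(∏ j ∈ Finset.range k, a j) * a k - 1‖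
        ≤ ‖((∏ j ∈ Finset.range k, a j) - 1) * a k‖ + ‖a k - 1‖ := by
          rw [key]; exact norm_add_le _ _
      _ = ‖(∏ j ∈ Finset.range k, a j) - 1‖ * ‖a k‖ + ‖a k - 1‖ := by rw [norm_mul]
      _ ≤ (3 * k * ε) * (1 + ε) + ε := by linarith
      _ ≤ 3 * (k+1 : ℕ) * ε := by push_cast; nlinarith

private lemma tendsto_aux {δ : ℝ} (hδ : 0 < δ) :
    Tendsto (fun n : ℕ => (n:ℝ) * Real.exp (-((n:ℝ) * (δ/2)))) atTop (nhds 0) := by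
  have hx : Tendsto (fun x : ℝ => x * Real.exp (-x)) atTop (nhds 0) := by
    simpa using Real.tendsto_pow_mul_exp_neg_atTop_nhds_zero 1
  have hn : Tendsto (fun n : ℕ => (n:ℝ) * (δ/2)) atTop atTop :=
    Tendsto.atTop_mul_const (by positivity) tendsto_natCast_atTop_atTop
  have h1 := (hx.comp hn).const_mul (2/δ)
  rw [mul_zero] at h1
  refine h1.congr fun n => ?_
  simp only [Function.comp]
  field_simp

/-- small complex distortion of iterates on exponentially small discs. -/
theorem stmt_2 (U : Set ℂ) (hU : IsOpen U) (g : ℂ → ℂ)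
    (hg : DifferentiableOn ℂ g U) (z₀ : ℂ) (hz₀ : z₀ ∈ U) (hfix : g z₀ = z₀)
    (hder : ‖deriv g z₀‖ = 1) (L η : ℝ) (hL : 0 < L) (hη : 0 < η)
    (hlip : ∀ x ∈ ball z₀ η, |Real.log ‖deriv g x‖| ≤ L * ‖x - z₀‖) :
    ∀ δ > (0:ℝ), ∃ lam : ℝ, 0 < lam ∧ lam < 1 ∧ ∃ r₀ > (0:ℝ), ∃ n₀ : ℕ,
      ∀ n ≥ n₀, ∀ i : ℕ, 1 ≤ i → i ≤ n →
        ∀ x ∈ ball z₀ (r₀ * Real.exp (-(n:ℝ) * δ)),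
        ∀ y ∈ ball z₀ (r₀ * Real.exp (-(n:ℝ) * δ)),
          ‖deriv (g^[i]) x / deriv (g^[i]) y - 1‖ ≤ lam ^ n := by
  intro δ hδ
  have hga : AnalyticOnNhd ℂ g U := hg.analyticOnNhd hU
  have hg'diff : DifferentiableOn ℂ (deriv g) U := hga.deriv.differentiableOn
  have hg''cont : ContinuousOn (deriv (deriv g)) U := hga.deriv.deriv.continuousOn
  obtain ⟨η₀, hη₀pos, hη₀⟩ : ∃ t > 0, closedBall z₀ t ⊆ U :=
    Metric.nhds_basis_closedBall.mem_iff.mp (hU.mem_nhds hz₀)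
  have hcont : ContinuousAt (deriv g) z₀ :=
    (hg'diff.differentiableAt (hU.mem_nhds hz₀)).continuousAt
  have hev : ∀ᶠ w in nhds z₀, (1/2:ℝ) < ‖deriv g w‖ := by
    have h12 : (1/2:ℝ) < ‖deriv g z₀‖ := by rw [hder]; norm_num
    exact hcont.norm.eventually (eventually_gt_nhds h12)
  obtain ⟨η₂, hη₂pos, hη₂⟩ := Metric.eventually_nhds_iff_ball.mp hev
  set η₁ := min η₀ (min (η/2) (η₂/2)) with hη₁def
  have hη₁pos : 0 < η₁ := lt_min hη₀pos (lt_min (by positivity) (by positivity))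
  have hsubU : closedBall z₀ η₁ ⊆ U :=
    (closedBall_subset_closedBall (min_le_left _ _)).trans hη₀
  have hsubη : closedBall z₀ η₁ ⊆ ball z₀ η := by
    apply closedBall_subset_ball
    calc η₁ ≤ η/2 := le_trans (min_le_right _ _) (min_le_left _ _)
      _ < η := by linarith
  have hlow : ∀ w ∈ closedBall z₀ η₁, (1/2:ℝ) ≤ ‖deriv g w‖ := by
    intro w hw
    refine le_of_lt (hη₂ w ?_)
    apply closedBall_subset_ball _ hw
    calc η₁ ≤ η₂/2 := le_trans (min_le_right _ _) (min_le_right _ _)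
      _ < η₂ := by linarith
  obtain ⟨M, hM⟩ := (isCompact_closedBall z₀ η₁).exists_bound_of_continuousOn
    (hg''cont.mono hsubU)
  set K := max M 1 with hKdef
  have hKpos : (0:ℝ) < K := lt_of_lt_of_le one_pos (le_max_right _ _)
  have hKlip : ∀ u ∈ closedBall z₀ η₁, ∀ v ∈ closedBall z₀ η₁,
      ‖deriv g v - deriv g u‖ ≤ K * ‖v - u‖ := by
    intro u hu v hv
    exact (convex_closedBall z₀ η₁).norm_image_sub_le_of_norm_deriv_le
      (fun w hw => hg'diff.differentiableAt (hU.mem_nhds (hsubU hw)))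
      (fun w hw => (hM w hw).trans (le_max_left _ _)) hu hv
  have hub : ∀ w ∈ closedBall z₀ η₁, ‖deriv g w‖ ≤ Real.exp (L * ‖w - z₀‖) := by
    intro w hw
    by_cases h0 : deriv g w = 0
    · rw [h0]; simp; positivity
    · have hpos : 0 < ‖deriv g w‖ := norm_pos_iff.mpr h0
      exact (Real.log_le_iff_le_exp hpos).mp (abs_le.mp (hlip w (hsubη hw))).2
  set lam := Real.exp (-(δ/2)) with hlamdef
  have hlam0 : 0 < lam := Real.exp_pos _
  have hlam1 : lam < 1 := by
    rw [hlamdef, ← Real.exp_zero]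
    exact Real.exp_lt_exp.mpr (by linarith)
  set r₀ := η₁/2 with hr₀def
  have hr₀pos : 0 < r₀ := by positivity
  refine ⟨lam, hlam0, hlam1, r₀, hr₀pos, ?_⟩
  set c₀ := min (Real.log 2 / (2*L*r₀)) (min (1/(24*K*r₀)) (1/(16*K*r₀))) with hc₀def
  have hlog2 : (0:ℝ) < Real.log 2 := Real.log_pos (by norm_num)
  have hc₀pos : 0 < c₀ :=
    lt_min (by positivity) (lt_min (by positivity) (by positivity))
  have hev2 : ∀ᶠ m : ℕ in atTop, (m:ℝ) * Real.exp (-((m:ℝ)*(δ/2))) ≤ c₀ :=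
    (tendsto_aux hδ).eventually (eventually_le_nhds hc₀pos)
  obtain ⟨n₀, hn₀⟩ := Filter.eventually_atTop.mp hev2
  refine ⟨n₀, ?_⟩
  intro n hn i hi1 hin x hx y hy
  set r := r₀ * Real.exp (-(n:ℝ) * δ) with hrdef
  have hrpos : 0 < r := by positivity
  set E := Real.exp (-((n:ℝ)*(δ/2))) with hEdef
  have hEpos : 0 < E := Real.exp_pos _
  have hE1 : E ≤ 1 := Real.exp_le_one_iff.mpr (by positivity |> neg_nonpos_of_nonneg)
  have hEE : Real.exp (-(n:ℝ) * δ) = E * E := by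
    rw [hEdef, ← Real.exp_add]; congr 1; ring
  have hr2 : 2 * r ≤ η₁ := by
    have h1 : Real.exp (-(n:ℝ) * δ) ≤ 1 := by
      rw [hEE]
      calc E * E ≤ 1 * 1 := mul_le_mul hE1 hE1 hEpos.le one_pos.le
        _ = 1 := one_mul 1
    calc 2 * r = η₁ * Real.exp (-(n:ℝ) * δ) := by rw [hrdef, hr₀def]; ring
      _ ≤ η₁ * 1 := mul_le_mul_of_nonneg_left h1 hη₁pos.le
      _ = η₁ := mul_one _
  have hnE : (n:ℝ) * E ≤ c₀ := hn₀ n hn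
  have hnr : (n:ℝ) * r = r₀ * ((n:ℝ) * E) * E := by rw [hrdef, hEE]; ring
  have hc1 : c₀ * (2*L*r₀) ≤ Real.log 2 := by
    have h : c₀ ≤ Real.log 2 / (2*L*r₀) := min_le_left _ _
    exact (le_div_iff₀ (by positivity)).mp h
  have hc2 : c₀ * (24*K*r₀) ≤ 1 := by
    have h : c₀ ≤ 1/(24*K*r₀) := (min_le_right _ _).trans (min_le_left _ _)
    exact (le_div_iff₀ (by positivity)).mp h
  have hc3 : c₀ * (16*K*r₀) ≤ 1 := by
    have h : c₀ ≤ 1/(16*K*r₀) := (min_le_right _ _).trans (min_le_right _ _)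
    exact (le_div_iff₀ (by positivity)).mp h
  have t1 : (n:ℝ)*E*E ≤ c₀*E := mul_le_mul_of_nonneg_right hnE hEpos.le
  have t2 : c₀*E ≤ c₀ := mul_le_of_le_one_right hc₀pos.le hE1
  have hnrc : (n:ℝ) * r ≤ r₀ * c₀ := by
    rw [hnr, mul_assoc]
    exact mul_le_mul_of_nonneg_left (by linarith : (n:ℝ)*E*E ≤ c₀) hr₀pos.le
  have hb' : (n:ℝ) * (2*L*r) ≤ Real.log 2 := by
    have := mul_le_mul_of_nonneg_left hnrc (by positivity : (0:ℝ) ≤ 2*L)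
    linarith
  have hc : 24*K*((n:ℝ)*r) ≤ E := by
    have u2 : 24*K*((n:ℝ)*r) = (24*K*r₀)*((n:ℝ)*E)*E := by rw [hnr]; ring
    rw [u2]
    calc (24*K*r₀)*((n:ℝ)*E)*E ≤ (24*K*r₀)*c₀*E :=
          mul_le_mul_of_nonneg_right
            (mul_le_mul_of_nonneg_left hnE (by positivity)) hEpos.le
      _ ≤ 1*E := mul_le_mul_of_nonneg_right (by linarith) hEpos.le
      _ = E := one_mul E
  have hc' : 8*K*((n:ℝ)*r) ≤ 1/2 := by
    have := mul_le_mul_of_nonneg_left hnrc (by positivity : (0:ℝ) ≤ 8*K)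
    linarith

  set A := Real.exp (2*L*r) with hAdef
  have hA1 : (1:ℝ) ≤ A := Real.one_le_exp (by positivity : (0:ℝ) ≤ 2*L*r)
  have hAn : ∀ j ≤ n, A ^ j ≤ 2 := by
    intro j hj
    calc A ^ j ≤ A ^ n := pow_le_pow_right₀ hA1 hj
      _ = Real.exp ((n:ℝ) * (2*L*r)) := by rw [Real.exp_nat_mul]
      _ ≤ Real.exp (Real.log 2) := Real.exp_le_exp.mpr hb'
      _ = 2 := Real.exp_log (by norm_num)
  have hball2 : closedBall z₀ (2*r) ⊆ closedBall z₀ η₁ := closedBall_subset_closedBall hr2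
  have hdiffat : ∀ w ∈ closedBall z₀ (2*r), DifferentiableAt ℂ g w := fun w hw =>
    hg.differentiableAt (hU.mem_nhds (hsubU (hball2 hw)))
  have hderb : ∀ w ∈ closedBall z₀ (2*r), ‖deriv g w‖ ≤ A := by
    intro w hw
    refine (hub w (hball2 hw)).trans (Real.exp_le_exp.mpr ?_)
    have hwn : ‖w - z₀‖ ≤ 2*r := by rwa [mem_closedBall, dist_eq_norm] at hw
    calc L * ‖w - z₀‖ ≤ L * (2*r) := mul_le_mul_of_nonneg_left hwn hL.le
      _ = 2*L*r := by ring
  have hmvt : ∀ u ∈ closedBall z₀ (2*r), ∀ v ∈ closedBall z₀ (2*r),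
      ‖g v - g u‖ ≤ A * ‖v - u‖ := fun u hu v hv =>
    (convex_closedBall z₀ (2*r)).norm_image_sub_le_of_norm_deriv_le hdiffat hderb hu hv
  have key : ∀ j, j ≤ n → ∀ w ∈ ball z₀ r, g^[j] w ∈ ball z₀ (A^j * r) := by
    intro j
    induction j with
    | zero => intro _ w hw; simpa using hw
    | succ k ih =>
      intro hk w hw
      have hk' : k ≤ n := Nat.le_of_succ_le hk
      have hu := ih hk' w hw
      have humem : g^[k] w ∈ closedBall z₀ (2*r) := by
        refine closedBall_subset_closedBall ?_ (ball_subset_closedBall hu)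
        calc A^k * r ≤ 2 * r := mul_le_mul_of_nonneg_right (hAn k hk') hrpos.le
          _ ≤ 2 * r := le_refl _
      rw [iterate_succ_apply']
      rw [mem_ball, dist_eq_norm]
      have h1 : ‖g (g^[k] w) - z₀‖ ≤ A * ‖g^[k] w - z₀‖ := by
        have := hmvt z₀ (mem_closedBall_self (by linarith)) (g^[k] w) humem
        rwa [hfix] at this
      have h2 : ‖g^[k] w - z₀‖ < A^k * r := by rwa [mem_ball, dist_eq_norm] at hu
      calc ‖g (g^[k] w) - z₀‖ ≤ A * ‖g^[k] w - z₀‖ := h1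
        _ < A * (A^k * r) := by
          exact mul_lt_mul_of_pos_left h2 (lt_of_lt_of_le one_pos hA1)
        _ = A^(k+1) * r := by ring
  have hmem : ∀ j, j ≤ n → ∀ w ∈ ball z₀ r, g^[j] w ∈ closedBall z₀ (2*r) := by
    intro j hj w hw
    refine closedBall_subset_closedBall ?_ (ball_subset_closedBall (key j hj w hw))
    exact mul_le_mul_of_nonneg_right (hAn j hj) hrpos.le
  have keyd : ∀ j, j ≤ n → ‖g^[j] x - g^[j] y‖ ≤ A^j * ‖x - y‖ := by
    intro j
    induction j with
    | zero => intro _; simp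
    | succ k ih =>
      intro hk
      have hk' : k ≤ n := Nat.le_of_succ_le hk
      have h1 := ih hk'
      rw [iterate_succ_apply', iterate_succ_apply']
      calc ‖g (g^[k] x) - g (g^[k] y)‖ ≤ A * ‖g^[k] x - g^[k] y‖ :=
            hmvt _ (hmem k hk' y hy) _ (hmem k hk' x hx)
        _ ≤ A * (A^k * ‖x - y‖) := by
            exact mul_le_mul_of_nonneg_left h1 (le_trans one_pos.le hA1)
        _ = A^(k+1) * ‖x - y‖ := by ring
  have hdkey : ∀ j, j ≤ n → ∀ w ∈ ball z₀ r, DifferentiableAt ℂ (g^[j]) w ∧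
      deriv (g^[j]) w = ∏ k ∈ Finset.range j, deriv g (g^[k] w) := by
    intro j
    induction j with
    | zero =>
      intro _ w _
      constructor
      · simpa using differentiableAt_id'
      · simp
    | succ k ih =>
      intro hk w hw
      have hk' : k ≤ n := Nat.le_of_succ_le hk
      obtain ⟨hd, he⟩ := ih hk' w hw
      have hgw : DifferentiableAt ℂ g (g^[k] w) :=
        hg.differentiableAt (hU.mem_nhds (hsubU (hball2 (hmem k hk' w hw))))
      constructor
      · rw [iterate_succ']
        exact hgw.comp w hd
      · rw [iterate_succ', deriv_comp w hgw hd, Finset.prod_range_succ, he]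
        ring
  obtain ⟨hdx, hex⟩ := hdkey i hin x hx
  obtain ⟨hdy, hey⟩ := hdkey i hin y hy
  set ε := 8 * K * r with hεdef
  have hε : (0:ℝ) ≤ ε := by positivity
  have hnε : (n:ℝ) * ε ≤ 1/2 := by
    have : (n:ℝ) * ε = 8*K*((n:ℝ)*r) := by rw [hεdef]; ring
    linarith [this ▸ hc']
  have hxy : ‖x - y‖ ≤ 2*r := by
    have hx' : ‖x - z₀‖ < r := by rwa [mem_ball, dist_eq_norm] at hx
    have hy' : ‖y - z₀‖ < r := by rwa [mem_ball, dist_eq_norm] at hy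
    calc ‖x - y‖ = ‖(x - z₀) - (y - z₀)‖ := by ring_nf
      _ ≤ ‖x - z₀‖ + ‖y - z₀‖ := norm_sub_le _ _
      _ ≤ 2*r := by linarith
  have hQ : ∀ k < n, ‖deriv g (g^[k] x) / deriv g (g^[k] y) - 1‖ ≤ ε := by
    intro k hki
    have hk' : k ≤ n := le_of_lt hki
    have hyk := hball2 (hmem k hk' y hy)
    have hxk := hball2 (hmem k hk' x hx)
    have hden : (1/2:ℝ) ≤ ‖deriv g (g^[k] y)‖ := hlow _ hyk
    have hbne : deriv g (g^[k] y) ≠ 0 := by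
      intro h0; rw [h0] at hden; simp at hden; linarith
    rw [div_sub_one hbne, norm_div]
    have hnum : ‖deriv g (g^[k] x) - deriv g (g^[k] y)‖ ≤ K * ‖g^[k] x - g^[k] y‖ :=
      hKlip _ hyk _ hxk
    have h1 : ‖g^[k] x - g^[k] y‖ ≤ 4 * r := by
      calc ‖g^[k] x - g^[k] y‖ ≤ A^k * ‖x - y‖ := keyd k hk'
        _ ≤ 2 * (2*r) := mul_le_mul (hAn k hk') hxy (norm_nonneg _) (by norm_num)
        _ = 4 * r := by ring
    have h2 : ‖deriv g (g^[k] x) - deriv g (g^[k] y)‖ ≤ K * (4*r) :=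
      hnum.trans (mul_le_mul_of_nonneg_left h1 hKpos.le)
    rw [div_le_iff₀ (by linarith : (0:ℝ) < ‖deriv g (g^[k] y)‖)]
    calc ‖deriv g (g^[k] x) - deriv g (g^[k] y)‖ ≤ K * (4*r) := h2
      _ = (8*K*r) * (1/2) := by ring
      _ ≤ ε * ‖deriv g (g^[k] y)‖ := by
          rw [hεdef]; exact mul_le_mul_of_nonneg_left hden (by positivity)
  have hfinal := prod_dist_one hε hnε
    (fun k => deriv g (g^[k] x) / deriv g (g^[k] y)) hQ i hin
  rw [hex, hey, ← Finset.prod_div_distrib]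
  refine hfinal.trans ?_
  have hi : (i:ℝ) ≤ (n:ℝ) := by exact_mod_cast hin
  calc 3 * (i:ℝ) * ε ≤ 3 * (n:ℝ) * ε := mul_le_mul_of_nonneg_right (by linarith) hε
    _ = 24*K*((n:ℝ)*r) := by rw [hεdef]; ring
    _ ≤ E := hc
    _ = lam ^ n := by
        rw [hlamdef, hEdef, ← Real.exp_nat_mul]; congr 1; ring
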